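/- Let P : C^op → InfSL be an elementary existential doctrine with weak full comprehensions such that for all objects A, B and all α ∈ P(A×B) with ⊤_A ≤ ∃_{pr1}(α) there exists w : A → B with ⊤_A ≤ P_{⟨id_A,w⟩}(α). Then the canonical functor L : Q_P → E_P from the elementary quotient completion to the subcategory of the exact completion on P-equivalence relations is full. -/

import Mathlib

open CategoryTheory CategoryTheory.Limits

universe u v w

/-- Layer 0: an indexed family of inf-semilattices over a category. -/
structure DocL0 (C : Type u) [Category.{v} C] where
  obj : C → Type w
  semi : ∀ A : C, SemilatticeInf (obj A)

attribute [instance] DocL0.semi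

/-- Layer 1: fibrewise top elements. -/
structure DocL1 (C : Type u) [Category.{v} C] extends DocL0.{u, v, w} C where
  otop : ∀ A : C, OrderTop (obj A)

attribute [instance] DocL1.otop

/-- A doctrine: an indexed inf-semilattice `P : Cᵒᵖ → InfSL`. -/
structure Doctrine (C : Type u) [Category.{v} C] extends DocL1.{u, v, w} C where
  map : ∀ {A B : C}, (A ⟶ B) → obj B → obj A
  map_id : ∀ (A : C) (x : obj A), map (𝟙 A) x = x
  map_comp : ∀ {A B D : C} (f : A ⟶ B) (g : B ⟶ D) (x : obj D),
    map (f ≫ g) x = map f (map g x)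
  map_mono : ∀ {A B : C} (f : A ⟶ B), Monotone (map f)
  map_inf : ∀ {A B : C} (f : A ⟶ B) (x y : obj B),
    map f (x ⊓ y) = map f x ⊓ map f y
  map_top : ∀ {A B : C} (f : A ⟶ B), map f (⊤ : obj B) = (⊤ : obj A)

/-- An elementary existential doctrine. -/
structure EED (C : Type u) [Category.{v} C] [HasBinaryProducts C] extends
    Doctrine.{u, v, w} C where
  delta : ∀ A : C, obj (A ⨯ A)
  elem_i : ∀ {A : C} (α : obj A) (β : obj (A ⨯ A)),
    map prod.fst α ⊓ delta A ≤ β ↔ α ≤ map (diag A) β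
  elem_ii : ∀ {X A : C} (α : obj (X ⨯ A)) (β : obj ((X ⨯ A) ⨯ A)),
    map prod.fst α ⊓ map (prod.lift (prod.fst ≫ prod.snd) prod.snd) (delta A) ≤ β ↔
      α ≤ map (prod.lift (𝟙 (X ⨯ A)) prod.snd) β
  ex : ∀ {A B : C}, (A ⟶ B) → obj A → obj B
  ex_adj : ∀ {A B : C} (f : A ⟶ B) (α : obj A) (β : obj B),
    ex f α ≤ β ↔ α ≤ map f β
  frobenius : ∀ {A B : C} (f : A ⟶ B) (α : obj B) (β : obj A),
    ex f (map f α ⊓ β) = α ⊓ ex f β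
  beck_chevalley : ∀ {A A' B : C} (f : A' ⟶ A) (β : obj (A ⨯ B)),
    ex prod.fst (map (prod.map f (𝟙 B)) β) = map f (ex prod.fst β)

namespace EED

variable {C : Type u} [Category.{v} C] [HasBinaryProducts C] (P : EED.{u, v, w} C)

/-- Relational composition `∃_{p₂}(P_{⟨p₁,p₂⟩}(θ) ∧ P_{⟨p₂,p₃⟩}(ζ))`. -/
noncomputable def comp {A B D : C} (θ : P.obj (A ⨯ B)) (ζ : P.obj (B ⨯ D)) : P.obj (A ⨯ D) :=
  P.ex (prod.lift (prod.fst ≫ prod.fst) prod.snd)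
    (P.map prod.fst θ ⊓ P.map (prod.lift (prod.fst ≫ prod.snd) prod.snd) ζ)

/-- Opposite relation `P_{⟨p₂,p₁⟩}(θ)`. -/
noncomputable def op {A B : C} (θ : P.obj (A ⨯ B)) : P.obj (B ⨯ A) :=
  P.map (prod.lift prod.snd prod.fst) θ

/-- `ρ ≤ P_{⟨p₂,p₁⟩}(ρ)`. -/
def SymmRel {A : C} (ρ : P.obj (A ⨯ A)) : Prop :=
  ρ ≤ P.map (prod.lift prod.snd prod.fst) ρ

/-- `P_{⟨p₁,p₂⟩}(ρ) ∧ P_{⟨p₂,p₃⟩}(ρ) ≤ P_{⟨p₁,p₃⟩}(ρ)` in `P((A×A)×A)`. -/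
def TransRel {A : C} (ρ : P.obj (A ⨯ A)) : Prop :=
  P.map prod.fst ρ ⊓ P.map (prod.lift (prod.fst ≫ prod.snd) prod.snd) ρ ≤
    P.map (prod.lift (prod.fst ≫ prod.fst) prod.snd) ρ

/-- `δ_A ≤ ρ`. -/
def ReflRel {A : C} (ρ : P.obj (A ⨯ A)) : Prop := P.delta A ≤ ρ

/-- A `P`-equivalence relation. -/
def EqRel {A : C} (ρ : P.obj (A ⨯ A)) : Prop :=
  P.ReflRel ρ ∧ P.SymmRel ρ ∧ P.TransRel ρ

/-- Conditions (i)–(v) for an arrow `φ : ⟨A,ρ⟩ → ⟨B,σ⟩` of the exact completion `T_P`. -/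
def IsArrow {A B : C} (ρ : P.obj (A ⨯ A)) (σ : P.obj (B ⨯ B)) (φ : P.obj (A ⨯ B)) : Prop :=
  (φ ≤ P.map (prod.lift prod.fst prod.fst) ρ ⊓ P.map (prod.lift prod.snd prod.snd) σ) ∧
  (P.map prod.fst ρ ⊓ P.map (prod.lift (prod.fst ≫ prod.snd) prod.snd) φ ≤
      P.map (prod.lift (prod.fst ≫ prod.fst) prod.snd) φ) ∧
  (P.map prod.fst φ ⊓ P.map (prod.lift (prod.fst ≫ prod.snd) prod.snd) σ ≤
      P.map (prod.lift (prod.fst ≫ prod.fst) prod.snd) φ) ∧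
  (P.map prod.fst φ ⊓ P.map (prod.lift (prod.fst ≫ prod.fst) prod.snd) φ ≤
      P.map (prod.lift (prod.fst ≫ prod.snd) prod.snd) σ) ∧
  (P.map (diag A) ρ ≤ P.ex prod.fst φ)

/-- The graph relation `L[f] = ∃_{p₂}(P_{⟨p₁,p₂⟩}(ρ) ∧ P_{⟨f∘p₂,p₃⟩}(σ))` in `P(A×B)`. -/
noncomputable def Lrel {A B : C} (f : A ⟶ B) (ρ : P.obj (A ⨯ A)) (σ : P.obj (B ⨯ B)) : P.obj (A ⨯ B) :=
  P.ex (prod.lift (prod.fst ≫ prod.fst) prod.snd)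
    (P.map prod.fst ρ ⊓ P.map (prod.lift (prod.fst ≫ prod.snd ≫ f) prod.snd) σ)

end EED

/-- if `P` has weak full comprehensions and satisfies the rule
of choice (every total relation contains the graph of a map), then the
canonical functor `L : Q_P → E_P` is full. -/
theorem L_full_of_choice
    {C : Type u} [Category.{v} C] [HasBinaryProducts C] (P : EED.{u, v, w} C)
    (cob : ∀ {A : C}, P.obj A → C) (cm : ∀ {A : C} (α : P.obj A), cob α ⟶ A)
    (hc_top : ∀ {A : C} (α : P.obj A), P.map (cm α) α = ⊤)
    (hc_weak : ∀ {A : C} (α : P.obj A) {Z : C} (f : Z ⟶ A),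
      P.map f α = ⊤ → ∃ g : Z ⟶ cob α, g ≫ cm α = f)
    (hc_full : ∀ {A : C} (α β : P.obj A) (k : cob α ⟶ cob β),
      k ≫ cm β = cm α → α ≤ β)
    (choice : ∀ {A B : C} (α : P.obj (A ⨯ B)),
      (⊤ : P.obj A) ≤ P.ex prod.fst α →
      ∃ w : A ⟶ B, (⊤ : P.obj A) ≤ P.map (prod.lift (𝟙 A) w) α)
    {A B : C} (ρ : P.obj (A ⨯ A)) (σ : P.obj (B ⨯ B))
    (hρ : P.EqRel ρ) (hσ : P.EqRel σ)
    (φ : P.obj (A ⨯ B)) (hφ : P.IsArrow ρ σ φ) :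
    ∃ f : A ⟶ B, ρ ≤ P.map (prod.map f f) σ ∧ P.Lrel f ρ σ = φ := by
  classical
  have mm : ∀ {X Y Z : C} (g : Z ⟶ Y) (h : Y ⟶ X) (α : P.obj X),
      P.map g (P.map h α) = P.map (g ≫ h) α := fun g h α => (P.map_comp g h α).symm
  have mtop : ∀ {X Z : C} (h : Z ⟶ X) {α β : P.obj X}, α ≤ β →
      P.map h α = ⊤ → P.map h β = ⊤ := by
    intro X Z h α β hab ha
    exact top_le_iff.mp (ha ▸ P.map_mono h hab)
  have le_ext : ∀ {X : C} (α β : P.obj X),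
      (∀ (Z : C) (h : Z ⟶ X), P.map h α = ⊤ → P.map h β = ⊤) → α ≤ β := by
    intro X α β H
    obtain ⟨k, hk⟩ := hc_weak β (cm α) (H _ _ (hc_top α))
    exact hc_full α β k hk
  have itop : ∀ {X Z : C} (h : Z ⟶ X) (α β : P.obj X),
      P.map h (α ⊓ β) = ⊤ ↔ P.map h α = ⊤ ∧ P.map h β = ⊤ := by
    intro X Z h α β
    rw [P.map_inf, inf_eq_top_iff]
  have etop : ∀ {X Y Z : C} (e : Y ⟶ X) (h : Z ⟶ X) (g : Z ⟶ Y), g ≫ e = h →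
      ∀ α : P.obj Y, P.map g α = ⊤ → P.map h (P.ex e α) = ⊤ := by
    intro X Y Z e h g hg α ha
    have h1 : α ≤ P.map e (P.ex e α) := (P.ex_adj e α _).mp le_rfl
    have h2 := mtop g h1 ha
    rw [mm, hg] at h2
    exact h2
  have hdiag : (⊤ : P.obj A) ≤ P.map (diag A) (P.delta A) :=
    (P.elem_i ⊤ (P.delta A)).mp inf_le_right
  have htot : (⊤ : P.obj A) ≤ P.ex prod.fst φ :=
    le_trans (le_trans hdiag (P.map_mono _ hρ.1)) hφ.2.2.2.2
  obtain ⟨f, hf⟩ := choice φ htot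
  have hf' : P.map (prod.lift (𝟙 A) f) φ = ⊤ := top_le_iff.mp hf
  have hgraph : ∀ {Z : C} (a : Z ⟶ A), P.map (prod.lift a (a ≫ f)) φ = ⊤ := by
    intro Z a
    have h1 : P.map (a ≫ prod.lift (𝟙 A) f) φ = ⊤ := by
      rw [← mm, hf', P.map_top]
    simpa [prod.comp_lift] using h1
  have hrefl : ∀ {Z : C} (a : Z ⟶ A), P.map (prod.lift a a) ρ = ⊤ := by
    intro Z a
    have h1 : P.map (a ≫ diag A) (P.delta A) = ⊤ := by
      rw [← mm, top_le_iff.mp hdiag, P.map_top]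
    have h2 := mtop (a ≫ diag A) hρ.1 h1
    rwa [prod.comp_diag] at h2
  have cii : ∀ {Z : C} (a a' : Z ⟶ A) (b : Z ⟶ B),
      P.map (prod.lift a a') ρ = ⊤ → P.map (prod.lift a' b) φ = ⊤ →
      P.map (prod.lift a b) φ = ⊤ := by
    intro Z a a' b h1 h2
    have hx : P.map (prod.lift (prod.lift a a') b)
        (P.map prod.fst ρ ⊓ P.map (prod.lift (prod.fst ≫ prod.snd) prod.snd) φ) = ⊤ := by
      rw [itop, mm, mm]
      exact ⟨by simpa [prod.lift_fst_assoc, prod.lift_snd_assoc, prod.lift_fst, prod.lift_snd] using h1, by simpa [prod.comp_lift, prod.lift_fst_assoc, prod.lift_snd_assoc, prod.lift_fst, prod.lift_snd] using h2⟩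
    have h3 := mtop _ hφ.2.1 hx
    rw [mm] at h3
    simpa [prod.comp_lift, prod.lift_fst_assoc, prod.lift_snd_assoc, prod.lift_fst, prod.lift_snd] using h3
  have ciii : ∀ {Z : C} (a : Z ⟶ A) (b b' : Z ⟶ B),
      P.map (prod.lift a b) φ = ⊤ → P.map (prod.lift b b') σ = ⊤ →
      P.map (prod.lift a b') φ = ⊤ := by
    intro Z a b b' h1 h2
    have hx : P.map (prod.lift (prod.lift a b) b')
        (P.map prod.fst φ ⊓ P.map (prod.lift (prod.fst ≫ prod.snd) prod.snd) σ) = ⊤ := by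
      rw [itop, mm, mm]
      exact ⟨by simpa [prod.lift_fst_assoc, prod.lift_snd_assoc, prod.lift_fst, prod.lift_snd] using h1, by simpa [prod.comp_lift, prod.lift_fst_assoc, prod.lift_snd_assoc, prod.lift_fst, prod.lift_snd] using h2⟩
    have h3 := mtop _ hφ.2.2.1 hx
    rw [mm] at h3
    simpa [prod.comp_lift, prod.lift_fst_assoc, prod.lift_snd_assoc, prod.lift_fst, prod.lift_snd] using h3
  have civ : ∀ {Z : C} (a : Z ⟶ A) (b b' : Z ⟶ B),
      P.map (prod.lift a b) φ = ⊤ → P.map (prod.lift a b') φ = ⊤ →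
      P.map (prod.lift b b') σ = ⊤ := by
    intro Z a b b' h1 h2
    have hx : P.map (prod.lift (prod.lift a b) b')
        (P.map prod.fst φ ⊓ P.map (prod.lift (prod.fst ≫ prod.fst) prod.snd) φ) = ⊤ := by
      rw [itop, mm, mm]
      exact ⟨by simpa [prod.lift_fst_assoc, prod.lift_snd_assoc, prod.lift_fst, prod.lift_snd] using h1, by simpa [prod.comp_lift, prod.lift_fst_assoc, prod.lift_snd_assoc, prod.lift_fst, prod.lift_snd] using h2⟩
    have h3 := mtop _ hφ.2.2.2.1 hx
    rw [mm] at h3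
    simpa [prod.comp_lift, prod.lift_fst_assoc, prod.lift_snd_assoc, prod.lift_fst, prod.lift_snd] using h3
  refine ⟨f, ?_, ?_⟩
  · apply le_ext
    intro Z h hh
    set a := h ≫ prod.fst with ha
    set a' := h ≫ prod.snd with ha'
    have hsplit : h = prod.lift a a' := by
      apply Limits.prod.hom_ext <;> simp [ha, ha', prod.lift_fst_assoc, prod.lift_snd_assoc, prod.lift_fst, prod.lift_snd]
    rw [hsplit] at hh
    have h3 := cii a a' (a' ≫ f) hh (hgraph a')
    have h4 := civ a (a ≫ f) (a' ≫ f) (hgraph a) h3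
    rw [mm, hsplit]
    simpa [prod.lift_map] using h4
  · apply le_antisymm
    · unfold EED.Lrel
      rw [P.ex_adj]
      apply le_ext
      intro Z h hh
      set a := h ≫ prod.fst ≫ prod.fst with ha
      set a' := h ≫ prod.fst ≫ prod.snd with ha'
      set b := h ≫ prod.snd with hb
      rw [itop, mm, mm] at hh
      obtain ⟨hh1, hh2⟩ := hh
      have hρaa' : P.map (prod.lift a a') ρ = ⊤ := by
        have e1 : h ≫ prod.fst = prod.lift a a' := by
          apply Limits.prod.hom_ext <;> simp [ha, ha', prod.lift_fst_assoc, prod.lift_snd_assoc, prod.lift_fst, prod.lift_snd]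
        rwa [e1] at hh1
      have hσ1 : P.map (prod.lift (a' ≫ f) b) σ = ⊤ := by
        have e1 : h ≫ prod.lift (prod.fst ≫ prod.snd ≫ f) prod.snd
            = prod.lift (a' ≫ f) b := by
          simp [ha', hb, prod.comp_lift]
        rwa [e1] at hh2
      have h2 := cii a a' (a' ≫ f) hρaa' (hgraph a')
      have h3 := ciii a (a' ≫ f) b h2 hσ1
      rw [mm]
      have e2 : h ≫ prod.lift (prod.fst ≫ prod.fst) prod.snd = prod.lift a b := by
        simp [ha, hb, prod.comp_lift]
      rw [e2]
      exact h3
    · apply le_ext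
      intro Z h hh
      set a := h ≫ prod.fst with ha
      set b := h ≫ prod.snd with hb
      have hsplit : h = prod.lift a b := by
        apply Limits.prod.hom_ext <;> simp [ha, hb, prod.lift_fst_assoc, prod.lift_snd_assoc, prod.lift_fst, prod.lift_snd]
      rw [hsplit] at hh
      unfold EED.Lrel
      refine etop _ _ (prod.lift (prod.lift a a) b) ?_ _ ?_
      · rw [hsplit]
        apply Limits.prod.hom_ext <;> simp [prod.lift_fst_assoc, prod.lift_snd_assoc, prod.lift_fst, prod.lift_snd]
      · rw [itop, mm, mm]
        constructor
        · have e1 : prod.lift (prod.lift a a) b ≫ prod.fst = prod.lift a a := by simp [prod.lift_fst_assoc, prod.lift_snd_assoc, prod.lift_fst, prod.lift_snd]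
          rw [e1]; exact hrefl a
        · have e2 : prod.lift (prod.lift a a) b ≫ prod.lift (prod.fst ≫ prod.snd ≫ f) prod.snd
              = prod.lift (a ≫ f) b := by simp [prod.comp_lift, prod.lift_fst_assoc, prod.lift_snd_assoc, prod.lift_fst, prod.lift_snd]
          rw [e2]
          exact civ a (a ≫ f) b (hgraph a) hh
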